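/- The unique solution φ of the initial value problem φ'(t) = n·cot²(R − φ(t)), φ(0) = 0, with values in [0,R), satisfies tan(R − φ(t)) + φ(t) = tan(R) − n·t for all t in its domain. Consequently, φ(t) = R exactly at time T = (tan R − R)/n. -/

import Mathlib

open Real Filter Topology

/-- The solution of `φ' = n·cot²(R − φ)`, `φ(0) = 0`, with values in `[0,R)`, satisfies
`tan(R − φ(t)) + φ(t) = tan R − n·t`, and reaches `R` exactly at `T = (tan R − R)/n`. -/
theorem stmt_4 (n : ℕ) (hn : 1 ≤ n) (R T : ℝ) (hR : 0 < R) (hR' : R < π / 2) (hT : 0 < T)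
    (φ : ℝ → ℝ) (h0 : φ 0 = 0)
    (hrange : ∀ t ∈ Set.Ico (0 : ℝ) T, φ t ∈ Set.Ico (0 : ℝ) R)
    (hode : ∀ t ∈ Set.Ico (0 : ℝ) T,
      HasDerivAt φ ((n : ℝ) * (Real.cos (R - φ t) / Real.sin (R - φ t)) ^ 2) t) :
    (∀ t ∈ Set.Ico (0 : ℝ) T, Real.tan (R - φ t) + φ t = Real.tan R - n * t) ∧
      (Tendsto φ (nhdsWithin T (Set.Iio T)) (nhds R) → T = (Real.tan R - R) / n) := by
  set g : ℝ → ℝ := fun s => Real.tan (R - φ s) + φ s + n * s with hg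
  have hcs : ∀ s ∈ Set.Ico (0:ℝ) T, 0 < Real.sin (R - φ s) ∧ 0 < Real.cos (R - φ s) := by
    intro s hs
    obtain ⟨h1, h2⟩ := hrange s hs
    have hπ := Real.pi_pos
    refine ⟨Real.sin_pos_of_pos_of_lt_pi (by linarith) (by linarith), ?_⟩
    exact Real.cos_pos_of_mem_Ioo ⟨by linarith, by linarith⟩
  have hderiv : ∀ s ∈ Set.Ico (0:ℝ) T, HasDerivAt g 0 s := by
    intro s hs
    obtain ⟨hsin, hcos⟩ := hcs s hs
    have hφ := hode s hs
    have h1 : HasDerivAt (fun u => R - φ u)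
        (0 - (n : ℝ) * (Real.cos (R - φ s) / Real.sin (R - φ s)) ^ 2) s :=
      (hasDerivAt_const s R).sub hφ
    have h2 : HasDerivAt (fun u => Real.tan (R - φ u))
        (1 / Real.cos (R - φ s) ^ 2 * (0 - (n : ℝ) * (Real.cos (R - φ s) / Real.sin (R - φ s)) ^ 2)) s :=
      by have := (Real.hasDerivAt_tan hcos.ne').comp s h1; exact this
    have h3 : HasDerivAt (fun u : ℝ => (n : ℝ) * u) ((n : ℝ)) s := by
      simpa using (hasDerivAt_id s).const_mul (n : ℝ)
    have h4 := (h2.add hφ).add h3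
    have heq : 1 / Real.cos (R - φ s) ^ 2 * (0 - (n : ℝ) * (Real.cos (R - φ s) / Real.sin (R - φ s)) ^ 2)
        + (n : ℝ) * (Real.cos (R - φ s) / Real.sin (R - φ s)) ^ 2 + (n : ℝ) = 0 := by
      have hpy := Real.sin_sq_add_cos_sq (R - φ s)
      field_simp
      linear_combination ((n : ℝ) * Real.cos (R - φ s) ^ 2) * hpy
    rw [heq] at h4
    exact h4
  have key : ∀ t ∈ Set.Ico (0:ℝ) T, Real.tan (R - φ t) + φ t = Real.tan R - n * t := by
    intro t ht
    have hsub : Set.Icc (0:ℝ) t ⊆ Set.Ico (0:ℝ) T := fun x hx =>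
      ⟨hx.1, lt_of_le_of_lt hx.2 ht.2⟩
    have hcont : ContinuousOn g (Set.Icc (0:ℝ) t) := fun x hx =>
      ((hderiv x (hsub hx)).continuousAt).continuousWithinAt
    have hd : ∀ x ∈ Set.Ico (0:ℝ) t, HasDerivWithinAt g 0 (Set.Ici x) x := fun x hx =>
      (hderiv x (hsub ⟨hx.1, hx.2.le⟩)).hasDerivWithinAt
    have := constant_of_has_deriv_right_zero hcont hd t ⟨ht.1, le_refl t⟩
    have hg0 : g 0 = Real.tan R := by simp [hg, h0]
    have hgt : g t = Real.tan R := by rw [this, hg0]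
    have : Real.tan (R - φ t) + φ t + n * t = Real.tan R := hgt
    linarith
  refine ⟨key, fun hlim => ?_⟩
  have hmem : Set.Ico (0:ℝ) T ∈ 𝓝[<] T :=
    mem_of_superset (Ioo_mem_nhdsLT_of_mem ⟨hT, le_refl T⟩) Set.Ioo_subset_Ico_self
  have hL1 : Tendsto (fun t => Real.tan (R - φ t) + φ t) (𝓝[<] T) (𝓝 R) := by
    have h1 : Tendsto (fun t => R - φ t) (𝓝[<] T) (𝓝 0) := by
      simpa using hlim.const_sub R
    have hct : ContinuousAt Real.tan 0 := Real.continuousAt_tan.mpr (by simp)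
    have h2 : Tendsto (fun t => Real.tan (R - φ t)) (𝓝[<] T) (𝓝 0) := by
      have := hct.tendsto.comp h1
      simpa [Function.comp_def] using this
    simpa using h2.add hlim
  have hL2 : Tendsto (fun t => Real.tan R - (n : ℝ) * t) (𝓝[<] T) (𝓝 (Real.tan R - n * T)) := by
    exact Tendsto.sub tendsto_const_nhds
      (((continuous_const.mul continuous_id).tendsto T).mono_left nhdsWithin_le_nhds)
  have hL1' : Tendsto (fun t => Real.tan R - (n : ℝ) * t) (𝓝[<] T) (𝓝 R) := by
    refine hL1.congr' ?_
    filter_upwards [hmem] with t ht using (key t ht)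
  have huniq : R = Real.tan R - n * T := tendsto_nhds_unique hL1' hL2
  have hn0 : (n : ℝ) ≠ 0 := by positivity
  field_simp
  linarith
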